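/- For the time-invariant skew-adjusted system: if A(t) = Ā − blkdiag([ω]×, [ω]×, [ω]×) where R(t) solves Ṙ = R[ω]× on SO(3), then the state transition matrix of A(t) factors as Φ(t,s) = R̄(t)ᵀ exp(Ā(t−s)) R̄(s), where R̄(t) = blkdiag(R(t), R(t), R(t)). -/

import Mathlib

open Matrix

noncomputable section

/-- The 9×9 nilpotent shift block matrix `Ā = [[0,I₃,0],[0,0,I₃],[0,0,0]]`. -/
def Abar : Matrix (Fin 9) (Fin 9) ℝ :=
  Matrix.of fun i j => if i.val + 3 = j.val then 1 else 0

/-- The 9×9 matrix `C = [[I₃,0,0],[0,0,0],[0,0,0]]` selecting the first block. -/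
def Cmat : Matrix (Fin 9) (Fin 9) ℝ :=
  Matrix.of fun i j => if i = j ∧ i.val < 3 then 1 else 0

/-- Block diagonal matrix `blkdiag(S,S,S)`. -/
def blkdiag3 (S : Matrix (Fin 3) (Fin 3) ℝ) : Matrix (Fin 9) (Fin 9) ℝ :=
  Matrix.of fun i j =>
    if i.val / 3 = j.val / 3 then
      S ⟨i.val % 3, Nat.mod_lt _ (by norm_num)⟩ ⟨j.val % 3, Nat.mod_lt _ (by norm_num)⟩
    else 0

/-- The skew-symmetric matrix `[x]×` with `[x]× y = x × y`. -/
def skew (x : Fin 3 → ℝ) : Matrix (Fin 3) (Fin 3) ℝ :=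
  !![0, -x 2, x 1; x 2, 0, -x 0; -x 1, x 0, 0]

/-- Embedding of `z₁ ∈ ℝ³` as `(z₁,0,0) ∈ ℝ⁹`. -/
def embed9 (z : Fin 3 → ℝ) : Fin 9 → ℝ :=
  fun i => if h : i.val < 3 then z ⟨i.val, h⟩ else 0

/-- Euclidean norm on `ℝ^m`. -/
def eucNorm {m : ℕ} (v : Fin m → ℝ) : ℝ := Real.sqrt (∑ i, v i ^ 2)

/- ## Auxiliary material -/

open Kronecker

attribute [local instance] Matrix.linftyOpNormedAddCommGroup Matrix.linftyOpNormedSpace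
  Matrix.linftyOpNormedRing Matrix.linftyOpNormedAlgebra

/-- `Fin 9 ≃ Fin 3 × Fin 3` by `i ↦ (i / 3, i % 3)`. -/
def fin9Equiv : Fin 9 ≃ Fin 3 × Fin 3 := (finProdFinEquiv (m := 3) (n := 3)).symm

/-- The 3×3 upper shift matrix. -/
def Umat : Matrix (Fin 3) (Fin 3) ℝ :=
  Matrix.of fun q q' => if q.val + 1 = q'.val then 1 else 0

lemma blkdiag3_eq (S : Matrix (Fin 3) (Fin 3) ℝ) :
    blkdiag3 S = ((1 : Matrix (Fin 3) (Fin 3) ℝ) ⊗ₖ S).submatrix fin9Equiv fin9Equiv := by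
  ext i j
  simp only [blkdiag3, Matrix.of_apply, Matrix.submatrix_apply, Matrix.kroneckerMap_apply,
    Matrix.one_apply, fin9Equiv, finProdFinEquiv_symm_apply]
  rcases eq_or_ne (i.val / 3) (j.val / 3) with h | h
  · rw [if_pos h, if_pos (Fin.ext (by exact h)), one_mul]
    rfl
  · rw [if_neg h, if_neg (fun hc => h (by exact congrArg Fin.val hc)),
      zero_mul]

lemma Abar_eq :
    Abar = (Umat ⊗ₖ (1 : Matrix (Fin 3) (Fin 3) ℝ)).submatrix fin9Equiv fin9Equiv := by
  ext i j
  simp only [Abar, Matrix.of_apply, Matrix.submatrix_apply, Matrix.kroneckerMap_apply,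
    Matrix.one_apply, Umat, fin9Equiv, finProdFinEquiv_symm_apply, Fin.ext_iff,
    Fin.coe_divNat, Fin.coe_modNat]
  simp only [show ∀ k : Fin 9, (((finProdFinEquiv (m := 3) (n := 3)).symm k).1 : ℕ) = k.val / 3
      from fun _ => rfl,
    show ∀ k : Fin 9, (((finProdFinEquiv (m := 3) (n := 3)).symm k).2 : ℕ) = k.val % 3
      from fun _ => rfl]
  have hi : i.val < 9 := i.isLt
  have hj : j.val < 9 := j.isLt
  split_ifs <;> norm_num <;> omega

lemma blkdiag3_mul (S T : Matrix (Fin 3) (Fin 3) ℝ) :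
    blkdiag3 S * blkdiag3 T = blkdiag3 (S * T) := by
  rw [blkdiag3_eq, blkdiag3_eq, blkdiag3_eq, Matrix.submatrix_mul_equiv,
    ← Matrix.mul_kronecker_mul, one_mul]

lemma blkdiag3_one : blkdiag3 (1 : Matrix (Fin 3) (Fin 3) ℝ) = 1 := by
  rw [blkdiag3_eq, Matrix.one_kronecker_one, Matrix.submatrix_one_equiv]

lemma blkdiag3_transpose (S : Matrix (Fin 3) (Fin 3) ℝ) :
    (blkdiag3 S)ᵀ = blkdiag3 Sᵀ := by
  ext i j
  simp only [Matrix.transpose_apply, blkdiag3, Matrix.of_apply]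
  rcases eq_or_ne (i.val / 3) (j.val / 3) with h | h
  · rw [if_pos h.symm, if_pos h]
  · rw [if_neg (Ne.symm h), if_neg h]

lemma blkdiag3_comm_Abar (S : Matrix (Fin 3) (Fin 3) ℝ) :
    blkdiag3 S * Abar = Abar * blkdiag3 S := by
  rw [blkdiag3_eq, Abar_eq, Matrix.submatrix_mul_equiv, Matrix.submatrix_mul_equiv,
    ← Matrix.mul_kronecker_mul, ← Matrix.mul_kronecker_mul, one_mul, mul_one, one_mul, mul_one]

lemma hasDerivAt_matrix {f : ℝ → Matrix (Fin 9) (Fin 9) ℝ} {f' : Matrix (Fin 9) (Fin 9) ℝ}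
    {x : ℝ} (h : ∀ i j, HasDerivAt (fun t => f t i j) (f' i j) x) : HasDerivAt f f' x := by
  refine (hasDerivAt_iff_tendsto_slope (f := f) (f' := f') (x := x)).mpr ?_
  rw [show slope f x = fun t => Matrix.of fun i j => slope (fun τ => f τ i j) x t by
    funext t i j
    simp [slope, Matrix.sub_apply, Matrix.smul_apply, smul_eq_mul, Pi.smul_apply]]
  refine tendsto_pi_nhds.mpr ?_
  intro i
  rw [tendsto_pi_nhds]
  intro j
  have := (h i j)
  rw [hasDerivAt_iff_tendsto_slope] at this
  exact this

/-- the state transition matrix of `A(t) = Ā − blkdiag([ω]×,[ω]×,[ω]×)`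
factors as `Φ(t,s) = R̄(t)ᵀ exp(Ā(t−s)) R̄(s)` where `R̄ = blkdiag(R,R,R)` and
`Ṙ = R[ω]×` on `SO(3)`. -/
theorem transition_factorization (ω : ℝ → Fin 3 → ℝ)
    (hω : ∀ i, Continuous fun t => ω t i)
    (R : ℝ → Matrix (Fin 3) (Fin 3) ℝ)
    (hSO : ∀ t, (R t)ᵀ * R t = 1 ∧ (R t).det = 1)
    (hR : ∀ t i j, HasDerivAt (fun τ => R τ i j) ((R t * skew (ω t)) i j) t)
    (A : ℝ → Matrix (Fin 9) (Fin 9) ℝ)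
    (hA : ∀ t, A t = Abar - blkdiag3 (skew (ω t)))
    (Φ : ℝ → ℝ → Matrix (Fin 9) (Fin 9) ℝ)
    (hΦ0 : ∀ s, Φ s s = 1)
    (hΦ : ∀ s t i j, HasDerivAt (fun τ => Φ τ s i j) ((A t * Φ t s) i j) t) :
    ∀ t s, Φ t s = (blkdiag3 (R t))ᵀ * NormedSpace.exp ((t - s) • Abar) * blkdiag3 (R s) := by
  intro t s
  -- matrix-level derivative of Φ
  have hΦm : ∀ u, HasDerivAt (fun τ => Φ τ s) (A u * Φ u s) u := fun u =>
    hasDerivAt_matrix fun i j => hΦ s u i j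
  -- matrix-level derivative of R̄
  have hRb : ∀ u, HasDerivAt (fun τ => blkdiag3 (R τ))
      (blkdiag3 (R u) * blkdiag3 (skew (ω u))) u := by
    intro u
    apply hasDerivAt_matrix
    intro i j
    rw [blkdiag3_mul]
    by_cases h : i.val / 3 = j.val / 3
    · simpa [blkdiag3, h] using hR u _ _
    · simpa [blkdiag3, h] using hasDerivAt_const u (0 : ℝ)
  -- derivative of M := R̄ Φ
  have hMd : ∀ u, HasDerivAt (fun τ => blkdiag3 (R τ) * Φ τ s)
      (Abar * (blkdiag3 (R u) * Φ u s)) u := by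
    intro u
    have h2 := (hRb u).mul (hΦm u)
    have e1 : blkdiag3 (R u) * blkdiag3 (skew (ω u)) * Φ u s
        + blkdiag3 (R u) * (A u * Φ u s) = Abar * (blkdiag3 (R u) * Φ u s) := by
      rw [hA u, sub_mul, mul_sub, ← mul_assoc (blkdiag3 (R u)) Abar (Φ u s),
        blkdiag3_comm_Abar, mul_assoc Abar,
        ← mul_assoc (blkdiag3 (R u)) (blkdiag3 (skew (ω u))) (Φ u s)]
      abel
    exact e1 ▸ h2
  -- derivative of the exponential factor
  have hexp : ∀ u : ℝ, HasDerivAt (fun v : ℝ => NormedSpace.exp ((s - v) • Abar))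
      (-(NormedSpace.exp ((s - u) • Abar) * Abar)) u := by
    intro u
    have h1 := hasDerivAt_exp_smul_const (𝕂 := ℝ) Abar (s - u)
    have h2 : HasDerivAt (fun v : ℝ => s - v) (-1) u := (hasDerivAt_id u).const_sub s
    have h3 := HasDerivAt.scomp (𝕜 := ℝ) u h1 h2
    rw [neg_one_smul] at h3
    exact h3
  -- N := exp((s-v)Ā) R̄ Φ has zero derivative
  have hNd : ∀ u, HasDerivAt
      (fun v => NormedSpace.exp ((s - v) • Abar) * (blkdiag3 (R v) * Φ v s)) 0 u := by
    intro u
    have h4 := (hexp u).mul (hMd u)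
    have e2 : -(NormedSpace.exp ((s - u) • Abar) * Abar) * (blkdiag3 (R u) * Φ u s)
        + NormedSpace.exp ((s - u) • Abar) * (Abar * (blkdiag3 (R u) * Φ u s)) = 0 := by
      rw [neg_mul, mul_assoc, neg_add_cancel]
    exact e2 ▸ h4
  -- hence N is constant
  have hNc := is_const_of_deriv_eq_zero
    (f := fun v => NormedSpace.exp ((s - v) • Abar) * (blkdiag3 (R v) * Φ v s))
    (fun u => (hNd u).differentiableAt) (fun u => (hNd u).deriv) t s
  simp only [sub_self, zero_smul, NormedSpace.exp_zero, hΦ0, mul_one, one_mul] at hNc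
  -- invert the exponential
  have hcom : Commute ((t - s) • Abar) ((s - t) • Abar) :=
    ((Commute.refl Abar).smul_left (t - s)).smul_right (s - t)
  have key : NormedSpace.exp ((t - s) • Abar) * NormedSpace.exp ((s - t) • Abar) = 1 := by
    rw [← Matrix.exp_add_of_commute _ _ hcom, ← add_smul]
    norm_num
  have h5 : NormedSpace.exp ((t - s) • Abar)
        * (NormedSpace.exp ((s - t) • Abar) * (blkdiag3 (R t) * Φ t s))
      = NormedSpace.exp ((t - s) • Abar) * blkdiag3 (R s) := by rw [hNc]
  rw [← mul_assoc, key, one_mul] at h5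
  -- orthogonality of R̄
  have horth : (blkdiag3 (R t))ᵀ * blkdiag3 (R t) = 1 := by
    rw [blkdiag3_transpose, blkdiag3_mul, (hSO t).1, blkdiag3_one]
  calc Φ t s = ((blkdiag3 (R t))ᵀ * blkdiag3 (R t)) * Φ t s := by rw [horth, one_mul]
    _ = (blkdiag3 (R t))ᵀ * (blkdiag3 (R t) * Φ t s) := by rw [mul_assoc]
    _ = (blkdiag3 (R t))ᵀ * (NormedSpace.exp ((t - s) • Abar) * blkdiag3 (R s)) := by rw [h5]
    _ = (blkdiag3 (R t))ᵀ * NormedSpace.exp ((t - s) • Abar) * blkdiag3 (R s) := by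
        rw [mul_assoc]
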